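/- Let α, ε > 0. If ñ: ℕ → ℕ satisfies ñ(d) ≥ 2^{(α+ε)d} for all d, and for each d the points X₁,…,X_{ñ(d)} are chosen independently and uniformly at random from {0,1}^d, then the probability that [0,1]^d_α ⊆ conv{X₁,…,X_{ñ(d)}} tends to 1 as d → ∞. -/

import Mathlib

open Filter
open scoped BigOperators

/-- The 0/1-point of `ℝ^d` associated to a Boolean vector. -/
def bv {d : ℕ} (x : Fin d → Bool) : Fin d → ℝ := fun i => if x i then 1 else 0

/-- `2^d · p(z)`: the minimum number of cube vertices contained in a closed affine
halfspace `{x | ∑ i, a i * x i ≤ c}` containing `z`. -/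
noncomputable def minHalfCount (d : ℕ) (z : Fin d → ℝ) : ℕ :=
  sInf {m : ℕ | ∃ (a : Fin d → ℝ) (c : ℝ), (∑ i, a i * z i) ≤ c ∧
    m = {x : Fin d → Bool | (∑ i, a i * bv x i) ≤ c}.ncard}

/-- `[0,1]^d_α = {z ∈ [0,1]^d : p(z) ≥ 2^{-αd}}`. -/
noncomputable def cubeAlpha (d : ℕ) (α : ℝ) : Set (Fin d → ℝ) :=
  {z | (∀ i, z i ∈ Set.Icc (0 : ℝ) 1) ∧
    (2 : ℝ) ^ (-(α * (d : ℝ))) ≤ (2 : ℝ) ^ (-(d : ℝ)) * (minHalfCount d z : ℝ)}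

/-- cut-out set of the open halfspace `c < a·x` -/
noncomputable def Tset {d : ℕ} (a : Fin d → ℝ) (c : ℝ) : Finset (Fin d → Bool) :=
  @Finset.filter _ (fun x => c < ∑ i, a i * bv x i) (Classical.decPred _) Finset.univ

lemma mem_Tset {d : ℕ} {a : Fin d → ℝ} {c : ℝ} {x : Fin d → Bool} :
    x ∈ Tset a c ↔ c < ∑ i, a i * bv x i := by
  simp [Tset]


lemma separation {d : ℕ} {α : ℝ} {n : ℕ} {ω : Fin n → Fin d → Bool}
    (h : ¬ cubeAlpha d α ⊆ convexHull ℝ (bv '' Set.range ω)) :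
    ∃ (a : Fin d → ℝ) (c : ℝ),
      (2 : ℝ) ^ ((d : ℝ) - α * d) ≤ ((Tset a c).card : ℝ) ∧ ∀ i, ω i ∉ Tset a c := by
  rw [Set.not_subset] at h
  obtain ⟨z, hz, hznot⟩ := h
  -- separating functional
  have hfin : (bv '' Set.range ω).Finite := (Set.finite_range ω).image _
  obtain ⟨f, u, hfu, huz⟩ := geometric_hahn_banach_closed_point
    (convex_convexHull ℝ _) (hfin.isClosed_convexHull (𝕜 := ℝ)) hznot
  classical
  set a : Fin d → ℝ := fun i => f (fun j => if i = j then 1 else 0) with ha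
  have hf : ∀ y : Fin d → ℝ, f y = ∑ i, a i * y i := by
    intro y
    have := LinearMap.pi_apply_eq_sum_univ (f : (Fin d → ℝ) →ₗ[ℝ] ℝ) y
    simpa [ha, smul_eq_mul, mul_comm] using this
  refine ⟨a, u, ?_, ?_⟩
  · -- size bound
    obtain ⟨hz1, hz2⟩ := hz
    -- 2^(d - αd) ≤ minHalfCount
    have h2d : (0:ℝ) < (2:ℝ) ^ (d:ℝ) := Real.rpow_pos_of_pos two_pos _
    have hm : (2 : ℝ) ^ ((d : ℝ) - α * d) ≤ (minHalfCount d z : ℝ) := by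
      have := mul_le_mul_of_nonneg_left hz2 h2d.le
      calc (2 : ℝ) ^ ((d : ℝ) - α * d) = (2:ℝ) ^ (d:ℝ) * (2:ℝ) ^ (-(α * d)) := by
            rw [← Real.rpow_add two_pos]; ring_nf
        _ ≤ (2:ℝ) ^ (d:ℝ) * ((2:ℝ) ^ (-(d:ℝ)) * (minHalfCount d z : ℝ)) := this
        _ = (minHalfCount d z : ℝ) := by
            rw [← mul_assoc, ← Real.rpow_add two_pos]; simp
    -- minHalfCount ≤ card of the dual halfspace
    have hmem : minHalfCount d z ≤
        {x : Fin d → Bool | (∑ i, (-a) i * bv x i) ≤ -(∑ i, a i * z i)}.ncard := by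
      apply Nat.sInf_le
      exact ⟨-a, -(∑ i, a i * z i), le_of_eq (by simp), rfl⟩
    have hsub : {x : Fin d → Bool | (∑ i, (-a) i * bv x i) ≤ -(∑ i, a i * z i)}
        ⊆ (Tset a u : Set (Fin d → Bool)) := by
      intro x hx
      simp only [Set.mem_setOf_eq, Pi.neg_apply] at hx
      have hx' : ∑ i, a i * z i ≤ ∑ i, a i * bv x i := by
        have : -(∑ i, a i * bv x i) ≤ -(∑ i, a i * z i) := by
          simpa [neg_mul, Finset.sum_neg_distrib] using hx
        linarith
      have : u < ∑ i, a i * bv x i := lt_of_lt_of_le (by rw [← hf]; exact huz) hx'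
      exact Finset.mem_coe.mpr (mem_Tset.mpr this)
    have hcard := Set.ncard_le_ncard hsub (Set.toFinite _)
    rw [Set.ncard_coe_finset] at hcard
    calc (2 : ℝ) ^ ((d : ℝ) - α * d) ≤ (minHalfCount d z : ℝ) := hm
      _ ≤ _ := by exact_mod_cast le_trans hmem hcard
  · intro i hi
    have : f (bv (ω i)) < u := hfu _ (subset_convexHull ℝ _ ⟨ω i, ⟨i, rfl⟩, rfl⟩)
    rw [hf] at this
    exact absurd (mem_Tset.mp hi) (not_lt.mpr this.le)


/-- the family of all halfspace cuts -/
noncomputable def Fam (d : ℕ) : Finset (Finset (Fin d → Bool)) :=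
  @Finset.filter _ (fun T => ∃ a c, T = Tset a c) (Classical.decPred _) Finset.univ

lemma linmap {d : ℕ} (a : Fin d → ℝ) : IsLinearMap ℝ (fun y : Fin d → ℝ => ∑ i, a i * y i) := by
  constructor
  · intro y₁ y₂; simp [mul_add, Finset.sum_add_distrib]
  · intro c y; simp [Finset.mul_sum, smul_eq_mul]; congr 1; funext i; ring


lemma not_shatters {d : ℕ} {s : Finset (Fin d → Bool)} (hs : (Fam d).Shatters s) :
    s.card ≤ d + 1 := by
  classical
  -- bv restricted to s is affinely independent, else Radon contradicts shattering
  have haff : AffineIndependent ℝ (fun x : ↥s => bv (x : Fin d → Bool)) := by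
    by_contra hnot
    obtain ⟨I, p, hpI, hpIc⟩ := Convex.radon_partition hnot
    set t : Finset (Fin d → Bool) :=
      s.filter (fun x => ∃ h : x ∈ s, (⟨x, h⟩ : ↥s) ∈ I) with ht
    have hts : t ⊆ s := Finset.filter_subset _ _
    obtain ⟨uT, huT, hsu⟩ := hs hts
    simp only [Fam, Finset.mem_filter] at huT
    obtain ⟨_, a, c, rfl⟩ := huT
    -- membership characterizations
    have hmemI : ∀ x : ↥s, x ∈ I → c < ∑ i, a i * bv (x : Fin d → Bool) i := by
      intro x hxI
      have hxt : (x : Fin d → Bool) ∈ t := by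
        rw [ht, Finset.mem_filter]
        exact ⟨x.2, x.2, by simpa using hxI⟩
      rw [← hsu] at hxt
      exact mem_Tset.mp (Finset.mem_inter.mp hxt).2
    have hmemIc : ∀ x : ↥s, x ∉ I → ∑ i, a i * bv (x : Fin d → Bool) i ≤ c := by
      intro x hxI
      have hxt : (x : Fin d → Bool) ∉ t := by
        rw [ht, Finset.mem_filter]
        rintro ⟨-, h, hI⟩
        exact hxI (by simpa using hI)
      have : (x : Fin d → Bool) ∉ s ∩ Tset a c := by rw [hsu]; exact hxt
      have := fun h => this (Finset.mem_inter.mpr ⟨x.2, h⟩)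
      exact not_lt.mp (fun hlt => this (mem_Tset.mpr hlt))
    -- p is in both halfspaces
    have hgt : c < ∑ i, a i * p i := by
      have hconv : convexHull ℝ ((fun x : ↥s => bv (x : Fin d → Bool)) '' I) ⊆
          {y : Fin d → ℝ | c < ∑ i, a i * y i} := by
        apply convexHull_min _ (convex_halfSpace_gt (linmap a) c)
        rintro y ⟨x, hxI, rfl⟩
        exact hmemI x hxI
      exact hconv hpI
    have hle : ∑ i, a i * p i ≤ c := by
      have hconv : convexHull ℝ ((fun x : ↥s => bv (x : Fin d → Bool)) '' Iᶜ) ⊆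
          {y : Fin d → ℝ | ∑ i, a i * y i ≤ c} := by
        apply convexHull_min _ (convex_halfSpace_le (linmap a) c)
        rintro y ⟨x, hxI, rfl⟩
        exact hmemIc x hxI
      exact hconv hpIc
    exact absurd hgt (not_lt.mpr hle)
  have := haff.card_le_finrank_succ
  have hle : Module.finrank ℝ ↥(vectorSpan ℝ (Set.range fun x : ↥s => bv (x : Fin d → Bool)))
      ≤ Module.finrank ℝ (Fin d → ℝ) := Submodule.finrank_le _
  simp only [Fintype.card_coe] at this
  have hd : Module.finrank ℝ (Fin d → ℝ) = d := by simp
  omega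


lemma Fam_card (d : ℕ) : (Fam d).card ≤ (d + 2) * (2 ^ d) ^ (d + 1) := by
  classical
  have h1 := Finset.card_le_card_shatterer (Fam d)
  have h2 := Finset.card_shatterer_le_sum_vcDim (𝒜 := Fam d)
  have hvc : (Fam d).vcDim ≤ d + 1 := by
    apply Finset.sup_le
    intro s hs
    exact not_shatters (Finset.mem_shatterer.mp hs)
  have hcard : Fintype.card (Fin d → Bool) = 2 ^ d := by simp
  have h3 : ∑ k ∈ Finset.Iic (Fam d).vcDim, (Fintype.card (Fin d → Bool)).choose k
      ≤ ∑ k ∈ Finset.Iic (d + 1), (2 ^ d).choose k := by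
    rw [hcard]
    exact Finset.sum_le_sum_of_subset (Finset.Iic_subset_Iic.mpr hvc)
  have h4 : ∑ k ∈ Finset.Iic (d + 1), (2 ^ d).choose k ≤ (d + 2) * (2 ^ d) ^ (d + 1) := by
    calc ∑ k ∈ Finset.Iic (d + 1), (2 ^ d).choose k
        ≤ ∑ _k ∈ Finset.Iic (d + 1), (2 ^ d) ^ (d + 1) := by
          apply Finset.sum_le_sum
          intro k hk
          exact le_trans (Nat.choose_le_pow _ _)
            (Nat.pow_le_pow_right (Nat.one_le_two_pow) (Finset.mem_Iic.mp hk))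
      _ = (d + 2) * (2 ^ d) ^ (d + 1) := by
          rw [Finset.sum_const, Nat.card_Iic, smul_eq_mul]
  omega


lemma cube_le_exp {x : ℝ} (hx : 0 ≤ x) : x ^ 3 / 6 ≤ Real.exp x := by
  have h := Real.sum_le_exp_of_nonneg hx 4
  have : ∑ i ∈ Finset.range 4, x ^ i / (Nat.factorial i : ℝ)
      = 1 + x + x ^ 2 / 2 + x ^ 3 / 6 := by
    norm_num [Finset.sum_range_succ, Nat.factorial]
  rw [this] at h
  nlinarith [sq_nonneg x]


lemma R_tendsto (c : ℝ) (hc : 0 < c) :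
    Tendsto (fun d : ℕ => ((d : ℝ) + 2) + (d : ℝ) * ((d : ℝ) + 1) - (2 : ℝ) ^ (c * d))
      atTop atBot := by
  set K : ℝ := (Real.log 2 * c) ^ 3 / 6 with hK
  have hlog : 0 < Real.log 2 := Real.log_pos one_lt_two
  have hKpos : 0 < K := by positivity
  have hpow : ∀ d : ℕ, K * (d : ℝ) ^ 3 ≤ (2 : ℝ) ^ (c * d) := by
    intro d
    rw [Real.rpow_def_of_pos two_pos]
    have := cube_le_exp (x := Real.log 2 * (c * d)) (by positivity)
    calc K * (d : ℝ) ^ 3 = (Real.log 2 * (c * d)) ^ 3 / 6 := by rw [hK]; ring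
      _ ≤ _ := this
  apply tendsto_atBot_mono' atTop (f₁ := fun d : ℕ => -(d : ℝ))
  · rw [Filter.EventuallyLE, eventually_atTop]
    refine ⟨max 1 ⌈6 / K⌉₊, fun d hd => ?_⟩
    have hd1 : (1 : ℝ) ≤ (d : ℝ) := by
      exact_mod_cast le_trans (le_max_left _ _) hd
    have hd2 : 6 / K ≤ (d : ℝ) := by
      calc 6 / K ≤ (⌈6 / K⌉₊ : ℝ) := Nat.le_ceil _
        _ ≤ (d : ℝ) := by exact_mod_cast le_trans (le_max_right _ _) hd
    have h6 : 6 ≤ K * (d : ℝ) := by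
      rw [div_le_iff₀ hKpos] at hd2; linarith [hd2]
    have hcube : 6 * (d:ℝ)^2 ≤ K * (d:ℝ)^3 := by nlinarith [sq_nonneg (d:ℝ)]
    have := hpow d
    nlinarith [sq_nonneg ((d:ℝ) - 1)]
  · exact tendsto_neg_atBot_iff.mpr tendsto_natCast_atTop_atTop


lemma G_tendsto (α ε : ℝ) (hα : 0 < α) (hε : 0 < ε) (nt : ℕ → ℕ)
    (hn : ∀ d : ℕ, (2 : ℝ) ^ ((α + ε) * (d : ℝ)) ≤ (nt d : ℝ)) :
    Tendsto (fun d : ℕ => (((d + 2) * (2 ^ d) ^ (d + 1) : ℕ) : ℝ) *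
      (1 - (2 : ℝ) ^ (-(α * (d : ℝ)))) ^ (nt d)) atTop (nhds 0) := by
  have hnonneg : ∀ d : ℕ, (0:ℝ) ≤ 1 - (2 : ℝ) ^ (-(α * (d : ℝ))) := by
    intro d
    have : (2 : ℝ) ^ (-(α * (d : ℝ))) ≤ 1 :=
      Real.rpow_le_one_of_one_le_of_nonpos one_le_two (neg_nonpos.mpr (by positivity))
    linarith
  have key : ∀ d : ℕ, (((d + 2) * (2 ^ d) ^ (d + 1) : ℕ) : ℝ) *
      (1 - (2 : ℝ) ^ (-(α * (d : ℝ)))) ^ (nt d)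
      ≤ Real.exp (((d : ℝ) + 2) + (d : ℝ) * ((d : ℝ) + 1) - (2 : ℝ) ^ (ε * d)) := by
    intro d
    set t : ℝ := (2 : ℝ) ^ (-(α * (d : ℝ))) with hts
    have ht0 : 0 < t := Real.rpow_pos_of_pos two_pos _
    -- (1-t)^n ≤ exp(-(t*n)) ≤ exp(-(2^(εd)))
    have h1 : (1 - t) ^ (nt d) ≤ Real.exp (-(t * nt d)) := by
      have hle : 1 - t ≤ Real.exp (-t) := by
        have := Real.add_one_le_exp (-t); linarith
      calc (1 - t) ^ (nt d) ≤ (Real.exp (-t)) ^ (nt d) :=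
            pow_le_pow_left₀ (hnonneg d) hle _
        _ = Real.exp (-(t * nt d)) := by
            rw [← Real.exp_nat_mul]; congr 1; ring
    have h2 : (2:ℝ) ^ (ε * (d:ℝ)) ≤ t * nt d := by
      calc (2:ℝ) ^ (ε * (d:ℝ)) = t * (2:ℝ) ^ ((α + ε) * (d : ℝ)) := by
            rw [hts, ← Real.rpow_add two_pos]; congr 1; ring
        _ ≤ t * nt d := mul_le_mul_of_nonneg_left (hn d) ht0.le
    have h3 : (1 - t) ^ (nt d) ≤ Real.exp (-(2:ℝ) ^ (ε * (d:ℝ))) :=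
      h1.trans (Real.exp_le_exp.mpr (by linarith))
    -- cast bound
    have hc1 : ((d:ℝ) + 2) ≤ Real.exp ((d:ℝ) + 2) := by
      have := Real.add_one_le_exp ((d:ℝ) + 2); linarith
    have hc2 : ((2:ℝ) ^ d) ^ (d+1) ≤ Real.exp ((d : ℝ) * ((d:ℝ) + 1)) := by
      have h2e : (2:ℝ) ≤ Real.exp 1 := by
        have := Real.add_one_le_exp (1:ℝ); linarith
      calc ((2:ℝ) ^ d) ^ (d+1) ≤ ((Real.exp 1) ^ d) ^ (d+1) := by
            apply pow_le_pow_left₀ (by positivity)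
            exact pow_le_pow_left₀ (by norm_num) h2e d
        _ = Real.exp ((d : ℝ) * ((d:ℝ) + 1)) := by
            rw [Real.exp_one_pow, ← Real.exp_nat_mul]
            congr 1; push_cast; ring
    have hcast : (((d + 2) * (2 ^ d) ^ (d + 1) : ℕ) : ℝ)
        = ((d:ℝ) + 2) * ((2:ℝ) ^ d) ^ (d+1) := by push_cast; ring
    rw [hcast]
    calc ((d:ℝ) + 2) * ((2:ℝ) ^ d) ^ (d+1) * (1 - t) ^ (nt d)
        ≤ Real.exp ((d:ℝ) + 2) * Real.exp ((d : ℝ) * ((d:ℝ) + 1)) *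
            Real.exp (-(2:ℝ) ^ (ε * (d:ℝ))) := by
          have hA : ((d:ℝ) + 2) * ((2:ℝ) ^ d) ^ (d+1)
              ≤ Real.exp ((d:ℝ) + 2) * Real.exp ((d : ℝ) * ((d:ℝ) + 1)) :=
            mul_le_mul hc1 hc2 (by positivity) (Real.exp_nonneg _)
          exact mul_le_mul hA h3 (pow_nonneg (hnonneg d) _)
            (mul_nonneg (Real.exp_nonneg _) (Real.exp_nonneg _))
      _ = Real.exp (((d : ℝ) + 2) + (d : ℝ) * ((d : ℝ) + 1) - (2 : ℝ) ^ (ε * d)) := by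
          rw [← Real.exp_add, ← Real.exp_add, sub_eq_add_neg]
  apply squeeze_zero (fun d => mul_nonneg (Nat.cast_nonneg _) (pow_nonneg (hnonneg d) _)) key
  exact Real.tendsto_exp_atBot.comp (R_tendsto ε hε)


lemma bad_card_bound (α : ℝ) (hα : 0 < α) (d n : ℕ) :
    ({ω : Fin n → Fin d → Bool | ¬ cubeAlpha d α ⊆ convexHull ℝ (bv '' Set.range ω)}.ncard : ℝ)
    ≤ (((d + 2) * (2 ^ d) ^ (d + 1) : ℕ) : ℝ) *
      ((2 : ℝ) ^ (d : ℝ) * (1 - (2 : ℝ) ^ (-(α * (d : ℝ))))) ^ n := by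
  classical
  set Bad : Finset (Fin n → Fin d → Bool) :=
    Finset.univ.filter (fun ω => ¬ cubeAlpha d α ⊆ convexHull ℝ (bv '' Set.range ω)) with hB
  have hBad : ({ω : Fin n → Fin d → Bool |
      ¬ cubeAlpha d α ⊆ convexHull ℝ (bv '' Set.range ω)}.ncard : ℝ) = (Bad.card : ℝ) := by
    have : {ω : Fin n → Fin d → Bool | ¬ cubeAlpha d α ⊆ convexHull ℝ (bv '' Set.range ω)}
        = ↑Bad := by ext ω; simp [hB]
    rw [this, Set.ncard_coe_finset]
  rw [hBad]
  set Fam' : Finset (Finset (Fin d → Bool)) :=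
    (Fam d).filter (fun T => (2:ℝ) ^ ((d:ℝ) - α * (d:ℝ)) ≤ (T.card : ℝ)) with hF
  have hsub : Bad ⊆ Fam'.biUnion (fun T => Fintype.piFinset fun _ : Fin n => Tᶜ) := by
    intro ω hω
    rw [hB, Finset.mem_filter] at hω
    obtain ⟨a, c, hca, hnot⟩ := separation (α := α) hω.2
    rw [Finset.mem_biUnion]
    refine ⟨Tset a c, ?_, ?_⟩
    · rw [hF, Finset.mem_filter]
      exact ⟨Finset.mem_filter.mpr ⟨Finset.mem_univ _, a, c, rfl⟩, hca⟩
    · exact Fintype.mem_piFinset.mpr fun i => Finset.mem_compl.mpr (hnot i)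
  have hA0 : (0:ℝ) ≤ (2 : ℝ) ^ (d : ℝ) * (1 - (2 : ℝ) ^ (-(α * (d : ℝ)))) := by
    have h1 : (2 : ℝ) ^ (-(α * (d : ℝ))) ≤ 1 := by
      exact Real.rpow_le_one_of_one_le_of_nonpos one_le_two (neg_nonpos.mpr (by positivity))
    have := Real.rpow_nonneg (by norm_num : (0:ℝ) ≤ 2) (d:ℝ)
    nlinarith
  have hterm : ∀ T ∈ Fam', (((Fintype.piFinset fun _ : Fin n => Tᶜ).card : ℕ) : ℝ)
      ≤ ((2 : ℝ) ^ (d : ℝ) * (1 - (2 : ℝ) ^ (-(α * (d : ℝ))))) ^ n := by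
    intro T hT
    rw [hF, Finset.mem_filter] at hT
    have hcardle : T.card ≤ 2 ^ d := by
      have := Finset.card_le_univ T
      simpa using this
    have hcompl : ((Tᶜ.card : ℕ) : ℝ) = (2:ℝ) ^ (d:ℝ) - (T.card : ℝ) := by
      rw [Finset.card_compl]
      have hc2 : Fintype.card (Fin d → Bool) = 2 ^ d := by simp
      rw [hc2, Nat.cast_sub hcardle]
      congr 1
      push_cast
      exact (Real.rpow_natCast 2 d).symm
    have hkey : ((Tᶜ.card : ℕ) : ℝ) ≤ (2 : ℝ) ^ (d : ℝ) * (1 - (2 : ℝ) ^ (-(α * (d : ℝ)))) := by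
      rw [hcompl, mul_one_sub]
      have : (2:ℝ) ^ (d:ℝ) * (2:ℝ) ^ (-(α * (d:ℝ))) = (2:ℝ) ^ ((d:ℝ) - α * d) := by
        rw [← Real.rpow_add two_pos]; ring_nf
      rw [this]
      linarith [hT.2]
    calc (((Fintype.piFinset fun _ : Fin n => Tᶜ).card : ℕ) : ℝ)
        = ((Tᶜ.card : ℕ) : ℝ) ^ n := by
          rw [Fintype.card_piFinset]; push_cast; simp
      _ ≤ _ := pow_le_pow_left₀ (Nat.cast_nonneg _) hkey n
  calc (Bad.card : ℝ)
      ≤ ((Fam'.biUnion (fun T => Fintype.piFinset fun _ : Fin n => Tᶜ)).card : ℝ) := by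
        exact_mod_cast Finset.card_le_card hsub
    _ ≤ ∑ T ∈ Fam', (((Fintype.piFinset fun _ : Fin n => Tᶜ).card : ℕ) : ℝ) := by
        exact_mod_cast Finset.card_biUnion_le
    _ ≤ ∑ _T ∈ Fam', ((2 : ℝ) ^ (d : ℝ) * (1 - (2 : ℝ) ^ (-(α * (d : ℝ))))) ^ n :=
        Finset.sum_le_sum hterm
    _ = (Fam'.card : ℝ) * ((2 : ℝ) ^ (d : ℝ) * (1 - (2 : ℝ) ^ (-(α * (d : ℝ))))) ^ n := by
        rw [Finset.sum_const, nsmul_eq_mul]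
    _ ≤ _ := by
        apply mul_le_mul_of_nonneg_right _ (pow_nonneg hA0 n)
        have h1 : Fam'.card ≤ (Fam d).card := Finset.card_le_card (Finset.filter_subset _ _)
        exact_mod_cast h1.trans (Fam_card d)

/-- If `ñ(d) ≥ 2^{(α+ε)d}` and `X₁,…,X_{ñ(d)}` are independent uniform points of
`{0,1}^d`, then with probability tending to 1 the set `[0,1]^d_α` is contained in
their convex hull. -/
theorem stmt7 (α ε : ℝ) (hα : 0 < α) (hε : 0 < ε) (nt : ℕ → ℕ)
    (hn : ∀ d : ℕ, (2 : ℝ) ^ ((α + ε) * (d : ℝ)) ≤ (nt d : ℝ)) :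
    Tendsto (fun d : ℕ =>
        (({ω : Fin (nt d) → Fin d → Bool |
              cubeAlpha d α ⊆ convexHull ℝ (bv '' Set.range ω)}.ncard : ℝ) /
          (Fintype.card (Fin (nt d) → Fin d → Bool) : ℝ)))
      atTop (nhds 1) := by
  classical
  have hcard : ∀ d : ℕ, (Fintype.card (Fin (nt d) → Fin d → Bool) : ℝ)
      = ((2 : ℝ) ^ (d : ℝ)) ^ (nt d) := by
    intro d
    have h1 : Fintype.card (Fin (nt d) → Fin d → Bool) = (2 ^ d) ^ (nt d) := by
      simp [Fintype.card_fun]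
    rw [h1]
    push_cast
    rw [Real.rpow_natCast]
  have hpos : ∀ d : ℕ, (0:ℝ) < (Fintype.card (Fin (nt d) → Fin d → Bool) : ℝ) := by
    intro d
    rw [hcard d]
    positivity
  have hnonneg1 : ∀ d : ℕ, (0:ℝ) ≤ 1 - (2 : ℝ) ^ (-(α * (d : ℝ))) := by
    intro d
    have : (2 : ℝ) ^ (-(α * (d : ℝ))) ≤ 1 :=
      Real.rpow_le_one_of_one_le_of_nonpos one_le_two (neg_nonpos.mpr (by positivity))
    linarith
  -- bad ratio
  have hsplit : ∀ d : ℕ,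
      (({ω : Fin (nt d) → Fin d → Bool |
          cubeAlpha d α ⊆ convexHull ℝ (bv '' Set.range ω)}.ncard : ℝ) /
        (Fintype.card (Fin (nt d) → Fin d → Bool) : ℝ)) =
      1 - (({ω : Fin (nt d) → Fin d → Bool |
          ¬ cubeAlpha d α ⊆ convexHull ℝ (bv '' Set.range ω)}.ncard : ℝ) /
        (Fintype.card (Fin (nt d) → Fin d → Bool) : ℝ)) := by
    intro d
    have hcompl : {ω : Fin (nt d) → Fin d → Bool |
        ¬ cubeAlpha d α ⊆ convexHull ℝ (bv '' Set.range ω)}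
        = {ω : Fin (nt d) → Fin d → Bool |
            cubeAlpha d α ⊆ convexHull ℝ (bv '' Set.range ω)}ᶜ := by
      ext ω; simp
    have hsum := Set.ncard_add_ncard_compl
      {ω : Fin (nt d) → Fin d → Bool | cubeAlpha d α ⊆ convexHull ℝ (bv '' Set.range ω)}
    rw [Nat.card_eq_fintype_card] at hsum
    have hne : (Fintype.card (Fin (nt d) → Fin d → Bool) : ℝ) ≠ 0 := (hpos d).ne'
    rw [hcompl, eq_sub_iff_add_eq, ← add_div, div_eq_one_iff_eq hne]
    exact_mod_cast hsum
  have hbr0 : Tendsto (fun d : ℕ =>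
      (({ω : Fin (nt d) → Fin d → Bool |
          ¬ cubeAlpha d α ⊆ convexHull ℝ (bv '' Set.range ω)}.ncard : ℝ) /
        (Fintype.card (Fin (nt d) → Fin d → Bool) : ℝ))) atTop (nhds 0) := by
    refine squeeze_zero (fun d => div_nonneg (Nat.cast_nonneg _) (hpos d).le)
      (fun d => ?_) (G_tendsto α ε hα hε nt hn)
    rw [div_le_iff₀ (hpos d)]
    calc ({ω : Fin (nt d) → Fin d → Bool |
          ¬ cubeAlpha d α ⊆ convexHull ℝ (bv '' Set.range ω)}.ncard : ℝ)
        ≤ (((d + 2) * (2 ^ d) ^ (d + 1) : ℕ) : ℝ) *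
          ((2 : ℝ) ^ (d : ℝ) * (1 - (2 : ℝ) ^ (-(α * (d : ℝ))))) ^ (nt d) :=
          bad_card_bound α hα d (nt d)
      _ = (((d + 2) * (2 ^ d) ^ (d + 1) : ℕ) : ℝ) *
          (1 - (2 : ℝ) ^ (-(α * (d : ℝ)))) ^ (nt d) *
          (Fintype.card (Fin (nt d) → Fin d → Bool) : ℝ) := by
          rw [hcard d, mul_pow]; ring
  have hfin : Tendsto (fun d : ℕ => 1 -
      (({ω : Fin (nt d) → Fin d → Bool |
          ¬ cubeAlpha d α ⊆ convexHull ℝ (bv '' Set.range ω)}.ncard : ℝ) /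
        (Fintype.card (Fin (nt d) → Fin d → Bool) : ℝ))) atTop (nhds 1) := by
    have := (tendsto_const_nhds :
      Tendsto (fun _ : ℕ => (1:ℝ)) atTop (nhds 1)).sub hbr0
    simpa using this
  exact Tendsto.congr (fun d => (hsplit d).symm) hfin
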